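/- For every L > 0 and every n ∈ ℕ, ∫_{C_n(L)} e^{-r} dr = (1 − e^{-L/3^n})·∏_{j=1}^{n} (1 + e^{-2L/3^j}). -/

import Mathlib

open Real MeasureTheory

/-- The `n`-iterate mid-third Cantor set based in `[0, L]`:
`C₀(L) = [0,L]` and `C_{n+1}(L) = (1/3)·C_n(L) ∪ (2L/3 + (1/3)·C_n(L))`. -/
def cantorIterate : ℕ → ℝ → Set ℝ
  | 0, L => Set.Icc 0 L
  | n + 1, L =>
      (fun x => x / 3) '' cantorIterate n L ∪
        (fun x => 2 * L / 3 + x / 3) '' cantorIterate n L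

lemma cantor_subset (n : ℕ) : ∀ L : ℝ, 0 ≤ L → cantorIterate n L ⊆ Set.Icc 0 L := by
  induction n with
  | zero => intro L hL; exact subset_rfl
  | succ n ih =>
    intro L hL x hx
    rcases hx with ⟨y, hy, rfl⟩ | ⟨y, hy, rfl⟩ <;>
    · obtain ⟨h1, h2⟩ := ih L hL ‹_›
      constructor <;> [linarith; linarith]

lemma cantor_scale (n : ℕ) : ∀ L : ℝ,
    (fun x : ℝ => x / 3) '' cantorIterate n L = cantorIterate n (L / 3) := by
  induction n with
  | zero =>
    intro L; ext x
    simp only [cantorIterate, Set.mem_image, Set.mem_Icc]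
    constructor
    · rintro ⟨y, ⟨h1, h2⟩, rfl⟩; constructor <;> linarith
    · rintro ⟨h1, h2⟩; exact ⟨3 * x, ⟨by linarith, by linarith⟩, by ring⟩
  | succ n ih =>
    intro L
    show (fun x : ℝ => x / 3) '' _ = cantorIterate (n+1) (L/3)
    simp only [cantorIterate, Set.image_union, Set.image_image]
    rw [← ih L]
    simp only [Set.image_image]
    have h : (fun x : ℝ => (2*L/3 + x/3)/3) = fun x : ℝ => 2*(L/3)/3 + x/3/3 := by
      funext x; ring
    rw [h]

lemma cantor_measurable (n : ℕ) : ∀ L : ℝ, MeasurableSet (cantorIterate n L) := by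
  induction n with
  | zero => intro L; exact measurableSet_Icc
  | succ n ih =>
    intro L
    have h1 : (fun x : ℝ => x / 3) '' cantorIterate n L
        = (fun x : ℝ => 3 * x) ⁻¹' cantorIterate n L := by
      ext x
      simp only [Set.mem_image, Set.mem_preimage]
      constructor
      · rintro ⟨y, hy, rfl⟩; simpa [mul_div_cancel₀] using hy
      · intro h; exact ⟨3 * x, h, by ring⟩
    have h2 : (fun x : ℝ => 2 * L / 3 + x / 3) '' cantorIterate n L
        = (fun x : ℝ => 3 * (x - 2 * L / 3)) ⁻¹' cantorIterate n L := by
      ext x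
      simp only [Set.mem_image, Set.mem_preimage]
      constructor
      · rintro ⟨y, hy, rfl⟩; convert hy using 1; ring
      · intro h; exact ⟨3 * (x - 2 * L / 3), h, by ring⟩
    rw [cantorIterate, h1, h2]
    exact ((ih L).preimage (measurable_id.const_mul 3)).union
      ((ih L).preimage ((measurable_id.sub_const _).const_mul 3))

lemma cantor_integrableOn (n : ℕ) (L : ℝ) (hL : 0 ≤ L) :
    IntegrableOn (fun r => Real.exp (-r)) (cantorIterate n L) := by
  have : Continuous fun r : ℝ => Real.exp (-r) := Real.continuous_exp.comp continuous_neg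
  exact (this.integrableOn_Icc).mono_set (cantor_subset n L hL)

lemma integral_exp_neg_image_add (a : ℝ) (S : Set ℝ) (hSm : MeasurableSet S) :
    ∫ r in (fun x => a + x) '' S, Real.exp (-r)
      = Real.exp (-a) * ∫ r in S, Real.exp (-r) := by
  have himg : (fun x => a + x) '' S = (fun x : ℝ => x - a) ⁻¹' S := by
    ext x
    simp only [Set.mem_image, Set.mem_preimage]
    constructor
    · rintro ⟨y, hy, rfl⟩; simpa using hy
    · intro h; exact ⟨x - a, h, by ring⟩
  rw [himg]
  have key : ∀ x : ℝ, Set.indicator ((fun x : ℝ => x - a) ⁻¹' S) (fun r => Real.exp (-r)) x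
      = (fun y => Set.indicator S (fun y => Real.exp (-(y + a))) y) (x - a) := by
    intro x
    show _ = Set.indicator S (fun y => Real.exp (-(y + a))) (x - a)
    by_cases h : x - a ∈ S
    · rw [Set.indicator_of_mem (show x ∈ (fun x : ℝ => x - a) ⁻¹' S from h),
        Set.indicator_of_mem h]
      congr 1; ring
    · rw [Set.indicator_of_notMem (show x ∉ (fun x : ℝ => x - a) ⁻¹' S from h),
        Set.indicator_of_notMem h]
  have hm : MeasurableSet ((fun x : ℝ => x - a) ⁻¹' S) :=
    hSm.preimage (measurable_id.sub_const a)
  rw [← integral_indicator hm]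
  simp_rw [key]
  rw [integral_sub_right_eq_self (fun y => Set.indicator S (fun y => Real.exp (-(y + a))) y) a]
  rw [integral_indicator hSm]
  simp_rw [show ∀ y : ℝ, Real.exp (-(y+a)) = Real.exp (-a) * Real.exp (-y) by
    intro y; rw [← Real.exp_add]; ring_nf]
  rw [integral_const_mul]

lemma prod_Icc_one (f : ℕ → ℝ) (n : ℕ) :
    ∏ j ∈ Finset.Icc 1 n, f j = ∏ j ∈ Finset.range n, f (1 + j) := by
  rw [← Finset.Ico_add_one_right_eq_Icc, Finset.prod_Ico_eq_prod_range]
  simp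

lemma integral_exp_neg_Icc (L : ℝ) (hL : 0 ≤ L) :
    ∫ r in Set.Icc 0 L, Real.exp (-r) = 1 - Real.exp (-L) := by
  rw [MeasureTheory.integral_Icc_eq_integral_Ioc,
    ← intervalIntegral.integral_of_le hL,
    intervalIntegral.integral_comp_neg (fun x => Real.exp x), integral_exp]
  simp

theorem cantor_aux (n : ℕ) : ∀ L : ℝ, 0 < L →
    ∫ r in cantorIterate n L, Real.exp (-r) =
      (1 - Real.exp (-(L / 3 ^ n))) *
        ∏ j ∈ Finset.Icc 1 n, (1 + Real.exp (-(2 * L / 3 ^ j))) := by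
  induction n with
  | zero =>
    intro L hL
    rw [show cantorIterate 0 L = Set.Icc 0 L from rfl, integral_exp_neg_Icc L hL.le]
    norm_num
  | succ n ih =>
    intro L hL
    have hL3 : 0 < L / 3 := by linarith
    have hscale := cantor_scale n L
    have hshift : (fun x => 2 * L / 3 + x / 3) '' cantorIterate n L
        = (fun x => 2 * L / 3 + x) '' cantorIterate n (L / 3) := by
      rw [← hscale, Set.image_image]
    have hsub := cantor_subset n (L / 3) hL3.le
    have hmeas2 : MeasurableSet ((fun x => 2 * L / 3 + x) '' cantorIterate n (L / 3)) := by
      have : (fun x => 2 * L / 3 + x) '' cantorIterate n (L / 3)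
          = (fun x : ℝ => x - 2 * L / 3) ⁻¹' cantorIterate n (L / 3) := by
        ext x
        simp only [Set.mem_image, Set.mem_preimage]
        constructor
        · rintro ⟨y, hy, rfl⟩; simpa using hy
        · intro h; exact ⟨x - 2 * L / 3, h, by ring⟩
      rw [this]
      exact (cantor_measurable n (L / 3)).preimage (measurable_id.sub_const _)
    have hdisj : Disjoint (cantorIterate n (L / 3))
        ((fun x => 2 * L / 3 + x) '' cantorIterate n (L / 3)) := by
      rw [Set.disjoint_left]
      rintro x hx ⟨y, hy, rfl⟩
      have h1 := (hsub hx).2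
      have h2 := (hsub hy).1
      linarith
    have hcont : Continuous fun r : ℝ => Real.exp (-r) :=
      Real.continuous_exp.comp continuous_neg
    have hint1 : IntegrableOn (fun r => Real.exp (-r)) (cantorIterate n (L / 3)) :=
      cantor_integrableOn n (L / 3) hL3.le
    have hint2 : IntegrableOn (fun r => Real.exp (-r))
        ((fun x => 2 * L / 3 + x) '' cantorIterate n (L / 3)) := by
      refine (hcont.integrableOn_Icc (a := 0) (b := L)).mono_set ?_
      rintro x ⟨y, hy, rfl⟩
      have h1 := (hsub hy).1
      have h2 := (hsub hy).2
      constructor <;> linarith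
    rw [show cantorIterate (n + 1) L
        = (fun x => x / 3) '' cantorIterate n L ∪
          (fun x => 2 * L / 3 + x / 3) '' cantorIterate n L from rfl,
      hscale, hshift,
      setIntegral_union hdisj hmeas2 hint1 hint2,
      integral_exp_neg_image_add (2 * L / 3) _ (cantor_measurable n (L / 3)),
      ih (L / 3) hL3]
    have hE : L / 3 / (3:ℝ) ^ n = L / 3 ^ (n + 1) := by
      rw [div_div, pow_succ, mul_comm]
    have hprod : ∏ j ∈ Finset.Icc 1 (n + 1), (1 + Real.exp (-(2 * L / 3 ^ j)))
        = (1 + Real.exp (-(2 * L / 3)))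
          * ∏ j ∈ Finset.Icc 1 n, (1 + Real.exp (-(2 * (L / 3) / 3 ^ j))) := by
      rw [prod_Icc_one, prod_Icc_one, Finset.prod_range_succ' _ n]
      have : ∀ j, 2 * (L / 3) / (3:ℝ) ^ (1 + j) = 2 * L / 3 ^ (1 + (j + 1)) := by
        intro j
        rw [show 1 + (j + 1) = (1 + j) + 1 from by omega, pow_succ]
        ring
      simp only [this]
      norm_num [mul_comm]
    rw [hE, hprod]
    ring


/-- Product formula for the first eigenvalue:
`∫_{C_n(L)} e^{-r} dr = (1 - e^{-L/3ⁿ})·∏_{j=1}^{n} (1 + e^{-2L/3ʲ})`. -/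
theorem cantor_first_eigenvalue_product (L : ℝ) (hL : 0 < L) (n : ℕ) :
    ∫ r in cantorIterate n L, Real.exp (-r) =
      (1 - Real.exp (-(L / 3 ^ n))) *
        ∏ j ∈ Finset.Icc 1 n, (1 + Real.exp (-(2 * L / 3 ^ j))) := by
  exact cantor_aux n L hL
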